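/- arXiv:1504.06806 — 3 statements merged into one kernel-verified Lean document; each statement's English description precedes it below -/
import Mathlib

section
/- Let φ : X → Y be a surjective strongly étale G-morphism of affine G-schemes of finite type over k, where G is reductive. Then for any G-stable closed subscheme Z ⊆ Y whose categorical quotient Z//G is a single reduced point, there exists a G-stable closed subscheme W ⊆ X such that φ restricts to an isomorphism W → Z. -/
open scoped TensorProduct
set_option maxHeartbeats 1000000

def LinearlyReductive (k G : Type) [Field k] [Group G] : Prop :=
  ∀ (V : Type) (_ : AddCommGroup V) (_ : Module k V) (_ : FiniteDimensional k V)
    (ρ : Representation k G V), IsSemisimpleModule (MonoidAlgebra k G) ρ.asModule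

/-- Let `φ : X = Spec A → Y = Spec B` be a surjective strongly étale `G`-morphism of
affine `G`-schemes of finite type over `k` (`G` reductive).  Here `CA`, `CB` realize the
invariant rings `A^G = O(X//G)`, `B^G = O(Y//G)`, `ψ : CB → CA` is `O(φ//G)`; strong
étaleness says `φ//G` is étale and the square is cartesian (the canonical map
`A^G ⊗_{B^G} B → A` is bijective).  Then for any `G`-stable closed subscheme
`Z = Spec (B/J)` of `Y` whose categorical quotient `Z//G` is a single reduced point
(`(B/J)^G = k`), there is a `G`-stable closed subscheme `W = Spec (A/I)` of `X` such that
`φ` restricts to an isomorphism `W ≅ Z` (the induced map `B/J → A/I` is bijective). -/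
theorem strongly_etale_surjective_section_over_closed_orbit
    (k G A B CA CB : Type) [Field k] [IsAlgClosed k] [CharZero k] [Group G]
    [CommRing A] [Algebra k A] [CommRing B] [Algebra k B]
    [CommRing CA] [Algebra k CA] [CommRing CB] [Algebra k CB]
    (hfgA : Algebra.FiniteType k A) (hfgB : Algebra.FiniteType k B)
    (hred : LinearlyReductive k G)
    (ρA : G →* (A ≃ₐ[k] A)) (ρB : G →* (B ≃ₐ[k] B))
    (φ : B →ₐ[k] A)
    (hφequiv : ∀ (g : G) (b : B), φ (ρB g b) = ρA g (φ b))
    (ιA : CA →ₐ[k] A) (ιB : CB →ₐ[k] B)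
    (hinjA : Function.Injective ιA) (hinjB : Function.Injective ιB)
    (hrangeA : Set.range ιA = {a : A | ∀ g : G, ρA g a = a})
    (hrangeB : Set.range ιB = {b : B | ∀ g : G, ρB g b = b})
    (ψ : CB →ₐ[k] CA)
    (hψ : ∀ c : CB, ιA (ψ c) = φ (ιB c))
    -- algebra structures over the invariant ring `CB` of `Y`, compatible with the above
    [Algebra CB CA] [Algebra CB B] [Algebra CB A]
    (hCACB : (algebraMap CB CA : CB → CA) = ψ)
    (hBCB : (algebraMap CB B : CB → B) = ιB)
    (hACB : (algebraMap CB A : CB → A) = φ ∘ ιB)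
    -- `φ//G` is étale
    (hetale : Algebra.Etale CB CA)
    -- the square is cartesian: `A^G ⊗_{B^G} B ≅ A`
    (hcart : Function.Bijective
      (Algebra.TensorProduct.lift
        ({ toRingHom := ιA.toRingHom,
           commutes' := fun c => by
             simp only [AlgHom.toRingHom_eq_coe, RingHom.coe_coe]
             rw [show (algebraMap CB CA) c = ψ c from congrFun hCACB c,
               show (algebraMap CB A) c = φ (ιB c) from congrFun hACB c]
             exact hψ c } : CA →ₐ[CB] A)
        ({ toRingHom := φ.toRingHom,
           commutes' := fun c => by
             simp only [AlgHom.toRingHom_eq_coe, RingHom.coe_coe]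
             rw [show (algebraMap CB B) c = ιB c from congrFun hBCB c,
               show (algebraMap CB A) c = φ (ιB c) from congrFun hACB c]
             rfl } : B →ₐ[CB] A)
        (fun _ _ => Commute.all _ _)))
    -- `φ` is surjective (as a morphism of schemes)
    (hsurj : Function.Surjective (PrimeSpectrum.comap (φ : B →+* A)))
    (J : Ideal B) (hJtop : J ≠ ⊤)
    (hJstab : ∀ g : G, ∀ b ∈ J, ρB g b ∈ J)
    (hJinv : ∀ b : B, (∀ g : G, ρB g b - b ∈ J) → ∃ c : k, b - algebraMap k B c ∈ J) :
    ∃ I : Ideal A, (∀ g : G, ∀ a ∈ I, ρA g a ∈ I) ∧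
      ∃ hle : J ≤ I.comap (φ : B →+* A),
        Function.Bijective (Ideal.quotientMap I (φ : B →+* A) hle) := by
  classical
  -- abstract the tensor-product comparison map
  obtain ⟨T, hTbij, hTval⟩ : ∃ T : (CA ⊗[CB] B) →ₐ[CB] A,
      Function.Bijective T ∧ ∀ (c : CA) (b : B), T (c ⊗ₜ[CB] b) = ιA c * φ b :=
    ⟨_, hcart, fun c b => by rw [Algebra.TensorProduct.lift_tmul]; rfl⟩
  clear hcart
  -- a maximal ideal `M` of `A` whose contraction contains `J`
  obtain ⟨P, hPmax, hJP⟩ := Ideal.exists_le_maximal J hJtop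
  obtain ⟨Q, hQ⟩ := hsurj ⟨P, hPmax.isPrime⟩
  obtain ⟨M, hMmax, hQM⟩ := Ideal.exists_le_maximal Q.asIdeal Q.isPrime.ne_top
  have hPQ : Q.asIdeal.comap (φ : B →+* A) = P := by
    have := congrArg PrimeSpectrum.asIdeal hQ
    simpa using this
  have hMne : M.comap (φ : B →+* A) ≠ ⊤ := by
    intro h
    apply hMmax.ne_top
    rw [Ideal.eq_top_iff_one] at h ⊢
    have : (φ : B →+* A) 1 ∈ M := h
    simpa using this
  have hPM : P = M.comap (φ : B →+* A) :=
    hPmax.eq_of_le hMne (hPQ ▸ Ideal.comap_mono hQM)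
  have hJMc : J ≤ M.comap (φ : B →+* A) := hJP.trans hPM.le
  -- the residue field of `M` is `k`
  haveI : M.IsMaximal := hMmax
  letI : Field (A ⧸ M) := Ideal.Quotient.field M
  haveI : Algebra.FiniteType k (A ⧸ M) :=
    hfgA.of_surjective (Ideal.Quotient.mkₐ k M) (Ideal.Quotient.mkₐ_surjective k M)
  haveI : Module.Finite k (A ⧸ M) := finite_of_finite_type_of_isJacobsonRing k (A ⧸ M)
  haveI : Algebra.IsIntegral k (A ⧸ M) := Algebra.IsIntegral.of_finite k (A ⧸ M)
  have hbij : Function.Bijective (algebraMap k (A ⧸ M)) :=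
    ⟨(algebraMap k (A ⧸ M)).injective, IsAlgClosed.algebraMap_bijective_of_isIntegral.2⟩
  set ν : k ≃+* (A ⧸ M) := RingEquiv.ofBijective (algebraMap k (A ⧸ M)) hbij with hν
  set ε : A →+* k := ν.symm.toRingHom.comp (Ideal.Quotient.mk M) with hε
  have hεalg : ∀ x : k, ε (algebraMap k A x) = x := by
    intro x
    show ν.symm (Ideal.Quotient.mk M (algebraMap k A x)) = x
    rw [Ideal.Quotient.mk_algebraMap]
    exact ν.symm_apply_apply x
  have hεM : ∀ a ∈ M, ε a = 0 := by
    intro a ha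
    show ν.symm (Ideal.Quotient.mk M a) = 0
    rw [Ideal.Quotient.eq_zero_iff_mem.2 ha, map_zero]
  have hεJ : ∀ (b : B) (x : k), b - algebraMap k B x ∈ J → ε (φ b) = x := by
    intro b x hbx
    have hm : φ b - algebraMap k A x ∈ M := by
      have h2 := hJMc hbx
      rw [Ideal.mem_comap] at h2
      have : (φ : B →+* A) (b - algebraMap k B x) = φ b - algebraMap k A x := by
        rw [map_sub]; simp
      rwa [this] at h2
    have h0 := hεM _ hm
    rwa [map_sub, hεalg, sub_eq_zero] at h0
  -- the two legs of the lift to `B ⧸ J`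
  have fcomm : ∀ c : CB,
      (algebraMap k (B ⧸ J)) (ε (ιA (algebraMap CB CA c))) = algebraMap CB (B ⧸ J) c := by
    intro c
    have h1 : ιA (algebraMap CB CA c) = φ (ιB c) := by
      rw [show algebraMap CB CA c = ψ c from congrFun hCACB c]
      exact hψ c
    obtain ⟨x, hx⟩ := hJinv (ιB c) (fun g0 => by
      have hmem : (ιB c) ∈ Set.range ιB := ⟨c, rfl⟩
      rw [hrangeB] at hmem
      rw [hmem g0, sub_self]
      exact J.zero_mem)
    rw [h1, hεJ _ _ hx]
    have h2 : algebraMap CB (B ⧸ J) c = Ideal.Quotient.mk J (ιB c) := by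
      rw [← Ideal.Quotient.mk_algebraMap, show algebraMap CB B c = ιB c from congrFun hBCB c]
    rw [h2, ← Ideal.Quotient.mk_algebraMap]
    symm
    rw [Ideal.Quotient.eq]
    exact hx
  set f : CA →ₐ[CB] (B ⧸ J) :=
    { toRingHom := (algebraMap k (B ⧸ J)).comp (ε.comp ιA.toRingHom),
      commutes' := fun c => fcomm c } with hf
  set g : B →ₐ[CB] (B ⧸ J) := Ideal.Quotient.mkₐ CB J with hg
  set F : (CA ⊗[CB] B) →ₐ[CB] (B ⧸ J) :=
    Algebra.TensorProduct.lift f g (fun _ _ => Commute.all _ _) with hF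
  set E : (CA ⊗[CB] B) ≃+* A := RingEquiv.ofBijective T.toRingHom (by simpa using hTbij) with hE
  set Φ : A →+* (B ⧸ J) := F.toRingHom.comp E.symm.toRingHom with hΦ
  have hΦT : ∀ t : CA ⊗[CB] B, Φ (T t) = F t := by
    intro t
    show F (E.symm (T t)) = F t
    have : E.symm (T t) = E.symm (E t) := rfl
    rw [this, E.symm_apply_apply]
  have hΦφ : ∀ b : B, Φ (φ b) = Ideal.Quotient.mk J b := by
    intro b
    have h1 : Φ (φ b) = F ((1 : CA) ⊗ₜ[CB] b) := by
      rw [← hΦT]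
      congr 1
      rw [hTval]; simp
    rw [h1, hF, Algebra.TensorProduct.lift_tmul, map_one, one_mul]
    rfl
  have hΦι : ∀ c : CA, Φ (ιA c) = algebraMap k (B ⧸ J) (ε (ιA c)) := by
    intro c
    have h1 : Φ (ιA c) = F (c ⊗ₜ[CB] (1 : B)) := by
      rw [← hΦT]
      congr 1
      rw [hTval]; simp
    rw [h1, hF, Algebra.TensorProduct.lift_tmul, map_one, mul_one]
    rfl
  have hle : J ≤ (RingHom.ker Φ).comap (φ : B →+* A) := by
    intro b hb
    rw [Ideal.mem_comap, RingHom.mem_ker]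
    show Φ (φ b) = 0
    rw [hΦφ]
    exact Ideal.Quotient.eq_zero_iff_mem.2 hb
  refine ⟨RingHom.ker Φ, ?_, hle, ?_⟩
  · -- G-stability
    intro g0 a ha
    have hle' : J ≤ J.comap ((ρB g0 : B ≃ₐ[k] B) : B →+* B) := by
      intro b hb
      rw [Ideal.mem_comap]
      exact hJstab g0 b hb
    set q : (B ⧸ J) →+* (B ⧸ J) := Ideal.quotientMap J _ hle' with hq
    have hmain : ∀ t : CA ⊗[CB] B, Φ (ρA g0 (T t)) = q (Φ (T t)) := by
      intro t
      induction t using TensorProduct.induction_on with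
      | zero => simp
      | tmul c b =>
        rw [hTval]
        have h1 : (ρA g0) (ιA c * φ b) = ιA c * φ (ρB g0 b) := by
          rw [map_mul]
          congr 1
          · have hmem : (ιA c) ∈ Set.range ιA := ⟨c, rfl⟩
            rw [hrangeA] at hmem
            exact hmem g0
          · exact (hφequiv g0 b).symm
        rw [h1, map_mul, map_mul, hΦφ, hΦφ, hΦι]
        have h2 : q (algebraMap k (B ⧸ J) (ε (ιA c))) = algebraMap k (B ⧸ J) (ε (ιA c)) := by
          rw [← Ideal.Quotient.mk_algebraMap, hq, Ideal.quotientMap_mk]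
          congr 1
          exact (ρB g0).commutes (ε (ιA c))
        rw [map_mul, h2, hq, Ideal.quotientMap_mk]
        rfl
      | add x y hx hy => simp only [map_add, hx, hy]
    obtain ⟨t, ht⟩ := hTbij.2 a
    rw [RingHom.mem_ker] at ha ⊢
    rw [← ht, hmain t, ht, ha, map_zero]
  · -- bijectivity of the quotient map
    set q := Ideal.quotientMap (RingHom.ker Φ) (φ : B →+* A) hle with hq
    have klq : ∀ y : B ⧸ J, RingHom.kerLift Φ (q y) = y := by
      intro y
      obtain ⟨b, rfl⟩ := Ideal.Quotient.mk_surjective y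
      rw [hq, Ideal.quotientMap_mk, RingHom.kerLift_mk]
      exact hΦφ b
    constructor
    · intro x y h
      have h2 := congrArg (RingHom.kerLift Φ) h
      rwa [klq, klq] at h2
    · intro x
      refine ⟨RingHom.kerLift Φ x, RingHom.kerLift_injective Φ ?_⟩
      rw [klq]
end

section
/- Let A be a Noetherian local ring with a rational action of a linearly reductive group H fixing the maximal ideal, such that H acts trivially on m/m². If H acts trivially on A/m^n for some n, it acts trivially on A/m^{n+1}; consequently, if H acts trivially on m/m² and A is m-adically separated with the H-action compatible with the filtration, then H acts trivially on A. -/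
open IsLocalRing

/-- A group map from a linearly reductive group into the additive group of a
finite-dimensional vector space vanishes (unipotent targets receive no nontrivial maps). -/
lemma LinearlyReductive.addHom_eq_zero {k H : Type} [Field k] [Group H]
    (hred : LinearlyReductive k H) {U : Type} [AddCommGroup U] [Module k U]
    [FiniteDimensional k U] (φ : H → U) (hφ : ∀ g h : H, φ (g * h) = φ g + φ h)
    (h : H) : φ h = 0 := by
  have hone : φ 1 = 0 := by
    have h1 := hφ 1 1
    rw [one_mul] at h1
    exact (right_eq_add.mp h1)
  -- A representation of `H` on `k × U` by "unipotent upper triangular" maps.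
  let ρ' : Representation k H (k × U) :=
  { toFun := fun g =>
      { toFun := fun v => (v.1, v.2 + v.1 • φ g)
        map_add' := by
          intro v w
          ext
          · rfl
          · show v.2 + w.2 + (v.1 + w.1) • φ g = v.2 + v.1 • φ g + (w.2 + w.1 • φ g)
            rw [add_smul]; abel
        map_smul' := by
          intro c v
          ext
          · rfl
          · show c • v.2 + (c * v.1) • φ g = c • (v.2 + v.1 • φ g)
            rw [smul_add, mul_smul] }
    map_one' := LinearMap.ext fun v => by
      show (v.1, v.2 + v.1 • φ 1) = v
      rw [hone, smul_zero, add_zero]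
    map_mul' := fun g₁ g₂ => LinearMap.ext fun v => by
      show (v.1, v.2 + v.1 • φ (g₁ * g₂)) = (v.1, (v.2 + v.1 • φ g₂) + v.1 • φ g₁)
      rw [Prod.mk.injEq]
      refine ⟨rfl, ?_⟩
      rw [hφ, smul_add]
      abel }
  haveI hss : IsSemisimpleModule (MonoidAlgebra k H) ρ'.asModule :=
    hred (k × U) inferInstance inferInstance inferInstance ρ'
  have hfst : ∀ r : MonoidAlgebra k H, ∀ w : k × U, w.1 = 0 →
      (ρ'.asAlgebraHom r w).1 = 0 := by
    intro r
    induction r using MonoidAlgebra.induction_on with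
    | of g =>
      intro w hw
      rw [Representation.asAlgebraHom_of]
      exact hw
    | add f₁ f₂ h₁ h₂ =>
      intro w hw
      rw [map_add, LinearMap.add_apply, Prod.fst_add, h₁ w hw, h₂ w hw, add_zero]
    | smul c f hf =>
      intro w hw
      rw [map_smul, LinearMap.smul_apply, Prod.smul_fst, hf w hw, smul_zero]
  let e : ρ'.asModule ≃+ (k × U) := ρ'.asModuleEquiv
  let W : Submodule (MonoidAlgebra k H) ρ'.asModule :=
  { carrier := { v | (e v).1 = 0 }
    add_mem' := by
      intro x y hx hy
      show (e (x + y)).1 = 0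
      rw [map_add, Prod.fst_add, hx, hy, add_zero]
    zero_mem' := by
      show (e 0).1 = 0
      rw [map_zero]; rfl
    smul_mem' := by
      intro r v hv
      show (e (r • v)).1 = 0
      rw [show e (r • v) = ρ'.asAlgebraHom r (e v) from
        ρ'.asModuleEquiv_map_smul r v]
      exact hfst r (e v) hv }
  obtain ⟨W', hWc⟩ := exists_isCompl W
  set v0 : ρ'.asModule := e.symm (1, 0) with hv0def
  have hv0 : v0 ∈ W ⊔ W' := by rw [hWc.sup_eq_top]; trivial
  obtain ⟨w, hw, u, hu, huw⟩ := Submodule.mem_sup.mp hv0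
  have hu1 : (e u).1 = 1 := by
    have h2 : e w + e u = (1, 0) := by
      rw [← map_add, huw, hv0def, AddEquiv.apply_symm_apply]
    have h3 := congrArg Prod.fst h2
    rw [Prod.fst_add] at h3
    rw [hw] at h3
    simpa using h3
  set d : ρ'.asModule := (MonoidAlgebra.of k H h) • u - u with hddef
  have hdW' : d ∈ W' := W'.sub_mem (W'.smul_mem _ hu) hu
  have hde : e d = (0, φ h) := by
    rw [hddef, map_sub, show e ((MonoidAlgebra.of k H h) • u) = ρ'.asAlgebraHom (MonoidAlgebra.of k H h) (e u) from
      ρ'.asModuleEquiv_map_smul _ u, Representation.asAlgebraHom_of]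
    have : ρ' h (e u) = ((e u).1, (e u).2 + (e u).1 • φ h) := rfl
    rw [this]
    ext
    · show (e u).1 - (e u).1 = 0
      rw [sub_self]
    · show (e u).2 + (e u).1 • φ h - (e u).2 = φ h
      rw [hu1, one_smul, add_sub_cancel_left]
  have hdW : d ∈ W := by
    show (e d).1 = 0
    rw [hde]
  have hd0 : d = 0 := by
    have : d ∈ W ⊓ W' := Submodule.mem_inf.mpr ⟨hdW, hdW'⟩
    rw [hWc.inf_eq_bot] at this
    exact (Submodule.mem_bot _).mp this
  have : e d = 0 := by rw [hd0, map_zero]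
  rw [hde] at this
  exact congrArg Prod.snd this

/-- Let a linearly reductive group `H` act on a Noetherian local `k`-algebra `(A, m)` with
residue field `k`, preserving `m` and acting trivially on `m/m²`.  Then:
(1) if `H` acts trivially on `A/mⁿ` it acts trivially on `A/m^(n+1)`; and
(2) if `A` is `m`-adically separated then `H` acts trivially on `A`. -/
theorem trivial_action_on_quotients
    (k H A : Type) [Field k] [IsAlgClosed k] [CharZero k] [Group H]
    [CommRing A] [Algebra k A] [IsLocalRing A] [IsNoetherianRing A]
    (hres : Function.Bijective (algebraMap k (A ⧸ maximalIdeal A)))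
    (hred : LinearlyReductive k H)
    (ρ : H →* (A ≃ₐ[k] A))
    (hm : ∀ h : H, ∀ x ∈ maximalIdeal A, ρ h x ∈ maximalIdeal A)
    (htriv : ∀ h : H, ∀ x ∈ maximalIdeal A, ρ h x - x ∈ maximalIdeal A ^ 2) :
    (∀ n : ℕ, (∀ h : H, ∀ a : A, ρ h a - a ∈ maximalIdeal A ^ n) →
        ∀ h : H, ∀ a : A, ρ h a - a ∈ maximalIdeal A ^ (n + 1)) ∧
      ((⨅ n : ℕ, maximalIdeal A ^ n) = ⊥ → ∀ h : H, ∀ a : A, ρ h a = a) := by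
  set I : Ideal A := maximalIdeal A with hIdef
  -- every element of `A` is a `k`-scalar plus an element of `m`
  have hdec : ∀ a : A, ∃ c : k, a - algebraMap k A c ∈ I := by
    intro a
    obtain ⟨c, hc⟩ := hres.2 (Ideal.Quotient.mk I a)
    refine ⟨c, ?_⟩
    rw [← Ideal.Quotient.eq_zero_iff_mem, map_sub, Ideal.Quotient.mk_algebraMap, hc, sub_self]
  -- `ρ h` acts trivially on each graded piece `m^j/m^(j+1)`
  have key : ∀ h : H, ∀ j : ℕ, ∀ x ∈ I ^ j, ρ h x - x ∈ I ^ (j + 1) := by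
    intro h j
    induction j with
    | zero =>
      intro x _
      obtain ⟨c, hc⟩ := hdec x
      have heq : ρ h x - x = ρ h (x - algebraMap k A c) - (x - algebraMap k A c) := by
        rw [map_sub, AlgEquiv.commutes]; ring
      rw [heq, pow_one]
      exact (Ideal.pow_le_self two_ne_zero) (htriv h _ hc)
    | succ j ih =>
      intro x hx
      rw [pow_succ] at hx
      refine Submodule.mul_induction_on hx ?_ ?_
      · intro m hmI t htI
        have heq : ρ h (m * t) - m * t = (ρ h m - m) * (ρ h t) + m * (ρ h t - t) := by
          rw [map_mul]; ring
        rw [heq]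
        refine Ideal.add_mem _ ?_ ?_
        · have : (ρ h m - m) * (ρ h t) ∈ I ^ (j + 1) * I :=
            Ideal.mul_mem_mul (ih m hmI) (hm h t htI)
          rwa [← pow_succ] at this
        · have : m * (ρ h t - t) ∈ I ^ j * I ^ 2 :=
            Ideal.mul_mem_mul hmI (htriv h t htI)
          rwa [← pow_add] at this
      · intro x y hxp hyp
        have heq : ρ h (x + y) - (x + y) = (ρ h x - x) + (ρ h y - y) := by
          rw [map_add]; ring
        rw [heq]
        exact Ideal.add_mem _ hxp hyp
  -- Part (1)
  have part1 : ∀ n : ℕ, (∀ h : H, ∀ a : A, ρ h a - a ∈ I ^ n) →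
      ∀ h : H, ∀ a : A, ρ h a - a ∈ I ^ (n + 1) := by
    intro n hn h a
    set J : Ideal A := I ^ (n + 1) with hJdef
    set Q := A ⧸ J with hQdef
    set mk : A →+* Q := Ideal.Quotient.mk J with hmkdef
    set UQ : Ideal Q := (I ^ n).map mk with hUQdef
    -- elements of `I` annihilate `UQ` in `Q`
    have hkill : ∀ x ∈ I, ∀ v ∈ UQ, mk x * v = 0 := by
      intro x hx v hv
      obtain ⟨t, htI, htv⟩ := Ideal.mem_map_iff_of_surjective mk
        Ideal.Quotient.mk_surjective |>.mp hv
      rw [← htv, ← map_mul, Ideal.Quotient.eq_zero_iff_mem]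
      have : x * t ∈ I * I ^ n := Ideal.mul_mem_mul hx htI
      rwa [← pow_succ'] at this
    -- `UQ` is finite dimensional over `k`
    let Uk : Submodule k Q := Submodule.restrictScalars k UQ
    haveI hUfin : FiniteDimensional k Uk := by
      obtain ⟨S, hS⟩ := (isNoetherian_def.mp inferInstance : ∀ s : Ideal Q, s.FG) UQ
      have hsub : (S : Set Q) ⊆ Uk := by
        intro s hs
        show s ∈ UQ
        rw [← hS]
        exact Submodule.subset_span hs
      have hspan : Submodule.span k (S : Set Q) = Uk := by
        apply le_antisymm
        · exact Submodule.span_le.mpr hsub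
        · intro v hv
          have hv' : v ∈ Submodule.span Q (S : Set Q) := by rw [hS]; exact hv
          refine Submodule.span_induction ?_ ?_ ?_ ?_ hv'
          · intro s hs
            exact Submodule.subset_span hs
          · exact Submodule.zero_mem _
          · intro a b _ _ ha hb
            exact Submodule.add_mem _ ha hb
          · intro q v hvspan hmem
            obtain ⟨b, rfl⟩ := Ideal.Quotient.mk_surjective (I := J) q
            obtain ⟨c, hc⟩ := hdec b
            have hvUk : v ∈ UQ := by
              rw [← hS]
              exact hvspan
            have hqv : (mk b) • v = c • v := by
              have hb : b = (b - algebraMap k A c) + algebraMap k A c := by ring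
              have : mk b * v = mk (b - algebraMap k A c) * v + mk (algebraMap k A c) * v := by
                rw [← add_mul, ← map_add, ← hb]
              rw [smul_eq_mul, this, hkill _ hc v hvUk, zero_add,
                Ideal.Quotient.mk_algebraMap, Algebra.smul_def]
            rw [hqv]
            exact Submodule.smul_mem _ c hmem
      have : Uk.FG := ⟨S, hspan⟩
      exact Module.Finite.iff_fg.mpr this
    -- the additive cocycle `h ↦ ρ h a - a mod m^(n+1)`
    have hφmem : ∀ g : H, mk (ρ g a - a) ∈ Uk := fun g => Ideal.mem_map_of_mem mk (hn g a)
    let φ : H → Uk := fun g => ⟨mk (ρ g a - a), hφmem g⟩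
    have hφadd : ∀ g₁ g₂ : H, φ (g₁ * g₂) = φ g₁ + φ g₂ := by
      intro g₁ g₂
      apply Subtype.ext
      show mk (ρ (g₁ * g₂) a - a) = mk (ρ g₁ a - a) + mk (ρ g₂ a - a)
      have hmul : ρ (g₁ * g₂) a = ρ g₁ (ρ g₂ a) := by
        rw [map_mul]
        rfl
      have heq : ρ (g₁ * g₂) a - a =
          (ρ g₁ (ρ g₂ a - a) - (ρ g₂ a - a)) + (ρ g₂ a - a) + (ρ g₁ a - a) := by
        rw [hmul, map_sub]; ring
      have hker : mk (ρ g₁ (ρ g₂ a - a) - (ρ g₂ a - a)) = 0 := by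
        rw [Ideal.Quotient.eq_zero_iff_mem]
        exact key g₁ n _ (hn g₂ a)
      rw [heq, map_add, map_add, hker, zero_add, add_comm]
    have hφ0 := hred.addHom_eq_zero φ hφadd h
    have : mk (ρ h a - a) = 0 := congrArg Subtype.val hφ0
    rwa [Ideal.Quotient.eq_zero_iff_mem] at this
  constructor
  · exact part1
  · intro hsep h a
    have hall : ∀ n : ℕ, ∀ h : H, ∀ a : A, ρ h a - a ∈ I ^ n := by
      intro n
      induction n with
      | zero => intro h a; rw [pow_zero, Ideal.one_eq_top]; exact Submodule.mem_top
      | succ n ih => exact part1 n ih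
    have hbot : ρ h a - a ∈ (⊥ : Ideal A) := by
      rw [← hsep]
      exact Submodule.mem_iInf _ |>.mpr fun n => hall n h a
    exact sub_eq_zero.mp ((Submodule.mem_bot _).mp hbot)
end

section
/- For a Noetherian local k-algebra A with maximal ideal m and m^n = 0, the kernel of the natural group homomorphism Aut_k-alg(A) → GL(m/m²) is a unipotent algebraic group. -/
open IsLocalRing

/-- For a finite-dimensional local `k`-algebra `(A, m)` with residue field `k` and
`mⁿ = 0`, the kernel of the natural homomorphism `Aut_{k-alg}(A) → GL(m/m²)` is a
unipotent algebraic group: every `k`-algebra automorphism `φ` of `A` acting trivially on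
`m/m²` is a unipotent operator on `A`, i.e. `φ − id` is nilpotent. -/
theorem ker_to_cotangent_unipotent
    (k A : Type) [Field k] [CharZero k]
    [CommRing A] [Algebra k A] [IsLocalRing A]
    [FiniteDimensional k A]
    (hres : Function.Bijective (algebraMap k (A ⧸ maximalIdeal A)))
    (n : ℕ) (hn : maximalIdeal A ^ n = ⊥)
    (φ : A ≃ₐ[k] A)
    (hφ : ∀ x ∈ maximalIdeal A, φ x - x ∈ maximalIdeal A ^ 2) :
    IsNilpotent (φ.toLinearMap - LinearMap.id (R := k) (M := A)) := by
  set f : A →ₗ[k] A := φ.toLinearMap - LinearMap.id with hf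
  have hfa : ∀ a : A, f a = φ a - a := fun a => rfl
  -- φ preserves the maximal ideal
  have hφm : ∀ b ∈ maximalIdeal A, φ b ∈ maximalIdeal A := by
    intro b hb
    rw [mem_maximalIdeal, mem_nonunits_iff] at *
    intro hu
    exact hb (by simpa using hu.map φ.symm.toAlgHom)
  -- key: f maps m^i into m^(i+1)
  have key : ∀ i : ℕ, ∀ x ∈ maximalIdeal A ^ i, f x ∈ maximalIdeal A ^ (i + 1) := by
    intro i
    induction i with
    | zero =>
      intro x _
      obtain ⟨c, hc⟩ := hres.2 (Ideal.Quotient.mk (maximalIdeal A) x)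
      have hmem : x - algebraMap k A c ∈ maximalIdeal A := by
        have : Ideal.Quotient.mk (maximalIdeal A) (x - algebraMap k A c) = 0 := by
          rw [map_sub, ← Ideal.Quotient.algebraMap_eq, ← IsScalarTower.algebraMap_apply, hc, Ideal.Quotient.algebraMap_eq,
            sub_self]
        exact Ideal.Quotient.eq_zero_iff_mem.mp this
      have h2 := hφ _ hmem
      have hfx : f x = φ (x - algebraMap k A c) - (x - algebraMap k A c) := by
        rw [hfa, map_sub, AlgEquiv.commutes]
        ring
      rw [pow_one]
      rw [hfx]
      exact (Ideal.pow_le_self two_ne_zero) h2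
    | succ i ih =>
      intro x hx
      rw [pow_succ] at hx
      refine Submodule.mul_induction_on hx ?_ ?_
      · intro a ha b hb
        have : f (a * b) = (φ a - a) * φ b + a * (φ b - b) := by
          rw [hfa, map_mul]; ring
        rw [this]
        refine Ideal.add_mem _ ?_ ?_
        · have := Ideal.mul_mem_mul (ih a ha) (hφm b hb)
          rwa [← pow_succ] at this
        · have := Ideal.mul_mem_mul ha (hφ b hb)
          rwa [← pow_add] at this
      · intro x y hx hy
        rw [map_add]
        exact Ideal.add_mem _ hx hy
  -- iterate: f^j maps everything into m^j
  have iter : ∀ j : ℕ, ∀ a : A, (f ^ j) a ∈ maximalIdeal A ^ j := by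
    intro j
    induction j with
    | zero => intro a; simp
    | succ j ih =>
      intro a
      have : (f ^ (j + 1)) a = f ((f ^ j) a) := by
        rw [pow_succ', Module.End.mul_apply]
      rw [this]
      exact key j _ (ih a)
  refine ⟨n, ?_⟩
  ext a
  have := iter n a
  rw [hn] at this
  simpa using this
end
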